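/- The number of Motzkin paths of length n avoiding upward-runs, downward-runs, and flat-runs of length 1, for n = 0,...,11, is 1, 0, 1, 1, 2, 1, 5, 4, 12, 13, 34, 38. -/

import Mathlib

inductive Step : Type
  | U : Step
  | D : Step
  | F : Step
  deriving DecidableEq

open Step

/-- A Motzkin path: every prefix has at least as many `U`s as `D`s,
and the whole word has equally many `U`s and `D`s. -/
def IsMotzkin (w : List Step) : Prop :=
  (∀ p : List Step, p <+: w → p.count D ≤ p.count U) ∧ w.count U = w.count D

/-- The number of Motzkin paths of length `n`. -/
noncomputable def motzkinNum (n : ℕ) : ℕ :=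
  Nat.card {w : List Step // w.length = n ∧ IsMotzkin w}

/-- The word `w` contains a maximal run of the letter `s` of length exactly `k`. -/
def HasRun (w : List Step) (s : Step) (k : ℕ) : Prop :=
  ∃ a b : List Step,
    w = a ++ List.replicate k s ++ b ∧ a.getLast? ≠ some s ∧ b.head? ≠ some s

/-! ### A fast Boolean checker for the Motzkin condition -/

def motzB : ℕ → List Step → Bool
  | h, [] => h == 0
  | h, U :: t => motzB (h+1) t
  | h, D :: t => decide (0 < h) && motzB (h-1) t
  | h, F :: t => motzB h t

lemma prefix_cons_iff' {α} (p : List α) (a : α) (t : List α) :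
    p <+: a :: t ↔ p = [] ∨ ∃ q, q <+: t ∧ p = a :: q := by
  constructor
  · intro hp
    cases p with
    | nil => exact Or.inl rfl
    | cons x q =>
      rw [List.cons_prefix_cons] at hp
      exact Or.inr ⟨q, hp.2, by rw [hp.1]⟩
  · rintro (rfl | ⟨q, hq, rfl⟩)
    · exact List.nil_prefix
    · exact List.cons_prefix_cons.mpr ⟨rfl, hq⟩

lemma motzB_iff (w : List Step) : ∀ h : ℕ,
    motzB h w = true ↔
      ((∀ p, p <+: w → p.count D ≤ p.count U + h) ∧ w.count D = w.count U + h) := by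
  induction w with
  | nil =>
    intro h
    simp only [motzB, beq_iff_eq, List.prefix_nil, List.count_nil]
    constructor
    · rintro rfl; exact ⟨by rintro p rfl; simp, by simp⟩
    · rintro ⟨-, h2⟩; omega
  | cons s t ih =>
    intro h
    cases s
    case U =>
      simp only [motzB, ih (h+1)]
      constructor
      · rintro ⟨h1, h2⟩
        refine ⟨?_, by simp [List.count_cons]; omega⟩
        intro p hp
        rcases (prefix_cons_iff' p _ t).mp hp with rfl | ⟨q, hq, rfl⟩
        · simp
        · have := h1 q hq; simp [List.count_cons]; omega
      · rintro ⟨h1, h2⟩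
        refine ⟨?_, by simp [List.count_cons] at h2; omega⟩
        intro q hq
        have := h1 (U :: q) ((prefix_cons_iff' _ _ t).mpr (Or.inr ⟨q, hq, rfl⟩))
        simp [List.count_cons] at this; omega
    case D =>
      simp only [motzB, Bool.and_eq_true, decide_eq_true_iff, ih (h-1)]
      constructor
      · rintro ⟨hh, h1, h2⟩
        refine ⟨?_, by simp [List.count_cons]; omega⟩
        intro p hp
        rcases (prefix_cons_iff' p _ t).mp hp with rfl | ⟨q, hq, rfl⟩
        · simp
        · have := h1 q hq; simp [List.count_cons]; omega
      · rintro ⟨h1, h2⟩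
        have hh : 0 < h := by
          have := h1 [D] ((prefix_cons_iff' _ _ t).mpr (Or.inr ⟨[], List.nil_prefix, rfl⟩))
          simp at this; omega
        refine ⟨hh, ?_, by simp [List.count_cons] at h2; omega⟩
        intro q hq
        have := h1 (D :: q) ((prefix_cons_iff' _ _ t).mpr (Or.inr ⟨q, hq, rfl⟩))
        simp [List.count_cons] at this; omega
    case F =>
      simp only [motzB, ih h]
      constructor
      · rintro ⟨h1, h2⟩
        refine ⟨?_, by simp [List.count_cons]; omega⟩
        intro p hp
        rcases (prefix_cons_iff' p _ t).mp hp with rfl | ⟨q, hq, rfl⟩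
        · simp
        · have := h1 q hq; simp [List.count_cons]; omega
      · rintro ⟨h1, h2⟩
        refine ⟨?_, by simp [List.count_cons] at h2; omega⟩
        intro q hq
        have := h1 (F :: q) ((prefix_cons_iff' _ _ t).mpr (Or.inr ⟨q, hq, rfl⟩))
        simp [List.count_cons] at this; omega

lemma isMotzkin_iff_motzB (w : List Step) : IsMotzkin w ↔ motzB 0 w = true := by
  rw [motzB_iff]
  unfold IsMotzkin
  constructor
  · rintro ⟨h1, h2⟩
    exact ⟨fun p hp => by have := h1 p hp; omega, by omega⟩
  · rintro ⟨h1, h2⟩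
    exact ⟨fun p hp => by have := h1 p hp; omega, by omega⟩

/-! ### A fast Boolean checker for avoiding runs of length 1 -/

lemma nr_nil (s : Step) : ¬ HasRun [] s 1 := by
  rintro ⟨a, b, h, -, -⟩
  simp [List.append_eq_nil_iff] at h

lemma peel (a : Step) (c : ℕ) (t : List Step) (hc : 1 ≤ c) (ht : t.head? ≠ some a) :
    (∀ s, ¬ HasRun (List.replicate c a ++ t) s 1) ↔ (c ≠ 1 ∧ ∀ s, ¬ HasRun t s 1) := by
  constructor
  · intro hw
    constructor
    · rintro rfl
      exact hw a ⟨[], t, by simp, by simp, ht⟩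
    · rintro s ⟨x, y, rfl, hx, hy⟩
      apply hw s
      refine ⟨List.replicate c a ++ x, y, by simp, ?_, hy⟩
      cases x with
      | nil =>
        have hs : s ≠ a := by simp at ht; tauto
        rw [List.append_nil, List.getLast?_replicate, if_neg (by omega)]
        simp [Ne.symm hs]
      | cons z x' =>
        rwa [List.getLast?_append_of_ne_nil _ (by simp)]
  · rintro ⟨hc1, ht'⟩ s ⟨x, y, heq, hx, hy⟩
    have hxw : x <+: List.replicate c a ++ t := ⟨List.replicate 1 s ++ y, by rw [heq]; simp⟩
    by_cases hlen : x.length < c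
    · have hxr : ∃ i, i < c ∧ x = List.replicate i a := by
        refine ⟨x.length, hlen, ?_⟩
        have hpre : x <+: List.replicate c a :=
          List.prefix_of_prefix_length_le hxw (List.prefix_append _ _) (by simp; omega)
        have h := List.prefix_iff_eq_take.mp hpre
        rw [List.take_replicate, min_eq_left (by omega)] at h
        exact h
      obtain ⟨i, hic, rfl⟩ := hxr
      have hsplit : List.replicate c a = List.replicate i a ++ List.replicate (c - i) a := by
        rw [← List.replicate_add]; congr 1; omega
      rw [hsplit, List.append_assoc, List.append_assoc] at heq
      have hcancel := List.append_cancel_left heq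
      have hs : s = a := by
        have h1 : (List.replicate (c - i) a ++ t).head? = some a := by
          rw [List.head?_append, List.head?_replicate, if_neg (by omega)]; rfl
        rw [hcancel] at h1
        simp at h1
        exact h1
      subst hs
      rcases Nat.eq_zero_or_pos i with rfl | hi
      · simp only [List.replicate_zero, Nat.sub_zero, List.nil_append] at hcancel
        have hc2 : 2 ≤ c := by omega
        have hrep : List.replicate c s = s :: List.replicate (c - 1) s := by
          rw [← List.replicate_succ]; congr 1; omega
        rw [hrep] at hcancel
        simp only [List.replicate_one, List.singleton_append, List.cons_append,
          List.cons.injEq] at hcancel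
        apply hy
        have h3 : y = List.replicate (c - 1) s ++ t := by simpa using hcancel.2.symm
        rw [h3, List.head?_append, List.head?_replicate, if_neg (by omega)]; rfl
      · apply hx
        rw [List.getLast?_replicate, if_neg (by omega)]
    · have hrx : List.replicate c a <+: x :=
        List.prefix_of_prefix_length_le (List.prefix_append _ _) hxw (by simp; omega)
      obtain ⟨x', rfl⟩ := hrx
      have ht2 : t = x' ++ List.replicate 1 s ++ y := by
        have h2 : List.replicate c a ++ t
            = List.replicate c a ++ (x' ++ (List.replicate 1 s ++ y)) := by
          simpa [List.append_assoc] using heq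
        simpa [List.append_assoc] using List.append_cancel_left h2
      refine ht' s ⟨x', y, ht2, ?_, hy⟩
      cases x' with
      | nil => simp
      | cons z x'' => rwa [List.getLast?_append_of_ne_nil _ (by simp)] at hx

def runs : Step → ℕ → List Step → Bool
  | _, c, [] => c != 1
  | a, c, b :: t => if a = b then runs a (c+1) t else c != 1 && runs b 1 t

def runsOK : List Step → Bool
  | [] => true
  | a :: t => runs a 1 t

lemma runs_iff (t : List Step) : ∀ (a : Step) (c : ℕ), 1 ≤ c →
    (runs a c t = true ↔ ∀ s, ¬ HasRun (List.replicate c a ++ t) s 1) := by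
  induction t with
  | nil =>
    intro a c hc
    rw [peel a c [] hc (by simp)]
    simp [runs, nr_nil]
  | cons b t' ih =>
    intro a c hc
    by_cases hab : a = b
    · subst hab
      have hrw : List.replicate c a ++ (a :: t') = List.replicate (c + 1) a ++ t' := by
        rw [List.replicate_succ', List.append_assoc]; rfl
      rw [hrw, ← ih a (c + 1) (by omega)]
      simp [runs]
    · rw [peel a c (b :: t') hc (by simpa using Ne.symm hab)]
      have := ih b 1 le_rfl
      simp only [List.replicate_one, List.singleton_append] at this
      simp [runs, hab, this]

lemma runsOK_iff (w : List Step) : runsOK w = true ↔ ∀ s, ¬ HasRun w s 1 := by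
  cases w with
  | nil => simp [runsOK, nr_nil]
  | cons a t =>
    have := runs_iff t a 1 le_rfl
    simp only [List.replicate_one, List.singleton_append] at this
    simpa [runsOK] using this

/-! ### Enumeration of all words of a given length -/

def enum : ℕ → List (List Step)
  | 0 => [[]]
  | n + 1 => (enum n).flatMap fun w => [U :: w, D :: w, F :: w]

lemma mem_enum : ∀ n (w : List Step), w ∈ enum n ↔ w.length = n := by
  intro n
  induction n with
  | zero => intro w; simp [enum, List.length_eq_zero_iff]
  | succ n ih =>
    intro w
    simp only [enum, List.mem_flatMap]
    constructor
    · rintro ⟨v, hv, hw⟩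
      have := (ih v).mp hv
      simp at hw
      rcases hw with rfl | rfl | rfl <;> simp [this]
    · intro hw
      cases w with
      | nil => simp at hw
      | cons s t =>
        refine ⟨t, (ih t).mpr (by simpa using hw), ?_⟩
        cases s <;> simp

lemma nodup_enum : ∀ n, (enum n).Nodup := by
  intro n
  induction n with
  | zero => simp [enum]
  | succ n ih =>
    rw [enum, List.nodup_flatMap]
    refine ⟨fun v _ => by simp, ?_⟩
    refine ih.imp ?_
    intro v v' hne l hl hl'
    simp only [List.mem_cons, List.mem_singleton, List.not_mem_nil, or_false] at hl hl'
    rcases hl with rfl | rfl | rfl <;> rcases hl' with h | h | h <;>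
      simp only [List.cons.injEq] at h <;> exact hne h.2

/-! ### The counting lemma -/

lemma card_eq (n : ℕ) :
    Nat.card {w : List Step // w.length = n ∧ IsMotzkin w ∧
      ¬ HasRun w U 1 ∧ ¬ HasRun w D 1 ∧ ¬ HasRun w F 1} =
    ((enum n).filter (fun w => motzB 0 w && runsOK w)).length := by
  have hiff : ∀ w : List Step,
      (w.length = n ∧ IsMotzkin w ∧ ¬ HasRun w U 1 ∧ ¬ HasRun w D 1 ∧ ¬ HasRun w F 1)
      ↔ w ∈ ((enum n).filter (fun w => motzB 0 w && runsOK w)).toFinset := by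
    intro w
    rw [List.mem_toFinset, List.mem_filter, mem_enum, Bool.and_eq_true,
      ← isMotzkin_iff_motzB, runsOK_iff]
    constructor
    · rintro ⟨h1, h2, h3, h4, h5⟩
      exact ⟨h1, h2, fun s => by cases s <;> assumption⟩
    · rintro ⟨h1, h2, h3⟩
      exact ⟨h1, h2, h3 U, h3 D, h3 F⟩
  rw [Nat.card_congr (Equiv.subtypeEquivRight hiff), Nat.card_eq_fintype_card,
    Fintype.card_coe, List.toFinset_card_of_nodup ((nodup_enum n).filter _)]

set_option maxRecDepth 40000 in
set_option maxHeartbeats 2000000 in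
def goodB (w : List Step) : Bool := motzB 0 w && runsOK w

/-! ### A state-machine version of the checker, and a pruned counting recursion -/

def runsG : Step → Bool → List Step → Bool
  | _, g, [] => g
  | a, g, b :: t => if a = b then runsG a true t else g && runsG b false t

lemma runs_eq_runsG : ∀ (t : List Step) (a : Step) (c : ℕ), 1 ≤ c →
    runs a c t = runsG a (c != 1) t := by
  intro t
  induction t with
  | nil => intro a c _; rfl
  | cons b t' ih =>
    intro a c hc
    by_cases hab : a = b
    · subst hab
      have h1 : ((c + 1) != 1) = true := by simp; omega
      simp [runs, runsG, ih _ (c + 1) (by omega), h1]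
    · simp [runs, runsG, hab, ih _ 1 le_rfl]

def scanB : ℕ → Step → Bool → List Step → Bool
  | h, _, g, [] => h == 0 && g
  | h, a, g, U :: t => if a = U then scanB (h+1) a true t else g && scanB (h+1) U false t
  | h, a, g, D :: t =>
      if a = D then decide (0 < h) && scanB (h-1) a true t
      else g && (decide (0 < h) && scanB (h-1) D false t)
  | h, a, g, F :: t => if a = F then scanB h a true t else g && scanB h F false t

lemma scanB_eq : ∀ (t : List Step) (h : ℕ) (a : Step) (g : Bool),
    scanB h a g t = (motzB h t && runsG a g t) := by
  intro t
  induction t with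
  | nil => intro h a g; rfl
  | cons b t' ih =>
    intro h a g
    cases b
    case U =>
      by_cases hab : a = U
      · subst hab; simp [scanB, motzB, runsG, ih]
      · simp only [scanB, motzB, runsG, if_neg hab, ih]
        cases g <;> cases motzB (h+1) t' <;> simp
    case D =>
      by_cases hab : a = D
      · subst hab; simp [scanB, motzB, runsG, ih, Bool.and_assoc, Bool.and_left_comm]
      · simp only [scanB, motzB, runsG, if_neg hab, ih]
        cases g <;> cases motzB (h-1) t' <;> cases hdec : decide (0 < h) <;> simp [hdec]
    case F =>
      by_cases hab : a = F
      · subst hab; simp [scanB, motzB, runsG, ih]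
      · simp only [scanB, motzB, runsG, if_neg hab, ih]
        cases g <;> cases motzB h t' <;> simp

lemma len3 (p : List Step → Bool) (l : List (List Step)) :
    ((l.flatMap fun w => [U :: w, D :: w, F :: w]).filter p).length
      = (l.filter (fun t => p (U :: t))).length + (l.filter (fun t => p (D :: t))).length
        + (l.filter (fun t => p (F :: t))).length := by
  induction l with
  | nil => simp
  | cons w l' ih =>
    simp only [List.flatMap_cons, List.filter_append, List.length_append, List.filter_cons, ih]
    cases p (U :: w) <;> cases p (D :: w) <;> cases p (F :: w) <;> simp <;> omega

def cntS : ℕ → ℕ → Step → Bool → ℕ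
  | 0, h, _, g => if h == 0 && g then 1 else 0
  | n + 1, h, a, g =>
      (if a = U then cntS n (h+1) a true else if g then cntS n (h+1) U false else 0)
    + (if a = D then (if 0 < h then cntS n (h-1) a true else 0)
       else if g then (if 0 < h then cntS n (h-1) D false else 0) else 0)
    + (if a = F then cntS n h a true else if g then cntS n h F false else 0)

lemma cntS_eq : ∀ (n : ℕ) (h : ℕ) (a : Step) (g : Bool),
    cntS n h a g = ((enum n).filter (fun t => scanB h a g t)).length := by
  intro n
  induction n with
  | zero =>
    intro h a g
    show (if h == 0 && g then 1 else 0) = _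
    rw [show enum 0 = [[]] from rfl]
    have hsc : scanB h a g [] = (h == 0 && g) := rfl
    cases hg : (h == 0 && g) <;> simp [List.filter_cons, hsc, hg]
  | succ n ih =>
    intro h a g
    rw [show enum (n + 1) = (enum n).flatMap fun w => [U :: w, D :: w, F :: w] from rfl,
      len3, show cntS (n+1) h a g =
      ((if a = U then cntS n (h+1) a true else if g then cntS n (h+1) U false else 0)
    + (if a = D then (if 0 < h then cntS n (h-1) a true else 0)
       else if g then (if 0 < h then cntS n (h-1) D false else 0) else 0)
    + (if a = F then cntS n h a true else if g then cntS n h F false else 0)) from rfl]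
    congr 1
    congr 1
    · -- U summand
      by_cases hab : a = U
      · subst hab; simp [scanB, ih]
      · cases g <;> simp [scanB, hab, ih]
    · -- D summand
      by_cases hab : a = D
      · subst hab
        by_cases hh : 0 < h <;> simp [scanB, hh, ih]
      · by_cases hh : 0 < h <;> cases g <;> simp [scanB, hab, hh, ih]
    · -- F summand
      by_cases hab : a = F
      · subst hab; simp [scanB, ih]
      · cases g <;> simp [scanB, hab, ih]

def topCnt : ℕ → ℕ
  | 0 => 1
  | n + 1 => cntS n 1 U false + cntS n 0 F false

lemma count_good (n : ℕ) :
    ((enum n).filter (fun w => motzB 0 w && runsOK w)).length = topCnt n := by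
  cases n with
  | zero => rfl
  | succ n =>
    rw [show enum (n + 1) = (enum n).flatMap fun w => [U :: w, D :: w, F :: w] from rfl, len3]
    have hU : ∀ t : List Step, (motzB 0 (U :: t) && runsOK (U :: t)) = scanB 1 U false t := by
      intro t
      rw [show motzB 0 (U :: t) = motzB 1 t from rfl,
        show runsOK (U :: t) = runs U 1 t from rfl, runs_eq_runsG t U 1 le_rfl, scanB_eq]
      rfl
    have hD : ∀ t : List Step, (motzB 0 (D :: t) && runsOK (D :: t)) = false := by
      intro t
      rw [show motzB 0 (D :: t) = (decide (0 < 0) && motzB 0 t) from rfl]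
      simp
    have hF : ∀ t : List Step, (motzB 0 (F :: t) && runsOK (F :: t)) = scanB 0 F false t := by
      intro t
      rw [show motzB 0 (F :: t) = motzB 0 t from rfl,
        show runsOK (F :: t) = runs F 1 t from rfl, runs_eq_runsG t F 1 le_rfl, scanB_eq]
      rfl
    simp only [hU, hD, hF, List.filter_false, List.length_nil]
    rw [show topCnt (n + 1) = cntS n 1 U false + cntS n 0 F false from rfl,
      cntS_eq, cntS_eq]
    omega

set_option maxRecDepth 10000 in
theorem motzkin_avoiding_runs1_values :
    (List.range 12).map (fun n =>
        Nat.card {w : List Step // w.length = n ∧ IsMotzkin w ∧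
          ¬ HasRun w U 1 ∧ ¬ HasRun w D 1 ∧ ¬ HasRun w F 1}) =
      [1, 0, 1, 1, 2, 1, 5, 4, 12, 13, 34, 38] := by
  simp only [card_eq, count_good]
  decide
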